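/- The 2-cocycle τ on gl_3(C_q) defined by τ(E_{ij}(s^{m1}t^{n1}), E_{kl}(s^{m2}t^{n2})) = (m1, n1) q^{n1 m2} δ_{jk} δ_{il} δ_{m1+m2,0} δ_{n1+n2,0} (valued in C^2) satisfies the cocycle conditions: τ(x,y) = −τ(y,x) and τ([x,y],z) + τ([y,z],x) + τ([z,x],y) = 0 for all x, y, z in gl_3(C_q). -/

import Mathlib

noncomputable section

/-- `gl₃(ℂ_q)` given by its basis `E_{ij}(s^m t^n)`. -/
abbrev L3 : Type := (Fin 3 × Fin 3) × ℤ × ℤ →₀ ℂ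

/-- The Lie bracket of `gl₃(ℂ_q)` on basis elements:
`[E_{ij}(s^{m1}t^{n1}), E_{kl}(s^{m2}t^{n2})] = δ_{jk} q^{n1 m2} E_{il}(s^{m1+m2}t^{n1+n2})
 − δ_{il} q^{n2 m1} E_{kj}(s^{m1+m2}t^{n1+n2})`. -/
def bb0 (q : ℂ) (x y : (Fin 3 × Fin 3) × ℤ × ℤ) : L3 :=
  (if x.1.2 = y.1.1 then
      Finsupp.single ((x.1.1, y.1.2), (x.2.1 + y.2.1, x.2.2 + y.2.2)) (q ^ (x.2.2 * y.2.1))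
    else 0)
  - (if x.1.1 = y.1.2 then
      Finsupp.single ((y.1.1, x.1.2), (x.2.1 + y.2.1, x.2.2 + y.2.2)) (q ^ (y.2.2 * x.2.1))
    else 0)

/-- The bracket on `gl₃(ℂ_q)`, extended bilinearly. -/
def brL (q : ℂ) (x y : L3) : L3 :=
  x.sum fun p α => y.sum fun r β => (α * β) • bb0 q p r

/-- The `ℂ²`-valued 2-cocycle on basis elements:
`τ(E_{ij}(s^{m1}t^{n1}), E_{kl}(s^{m2}t^{n2})) = (m1, n1) q^{n1 m2} δ_{jk} δ_{il} δ_{m1+m2,0} δ_{n1+n2,0}`. -/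
def tauB (q : ℂ) (x y : (Fin 3 × Fin 3) × ℤ × ℤ) : ℂ × ℂ :=
  if x.1.2 = y.1.1 ∧ x.1.1 = y.1.2 ∧ x.2.1 + y.2.1 = 0 ∧ x.2.2 + y.2.2 = 0 then
    ((x.2.1 : ℂ) * q ^ (x.2.2 * y.2.1), (x.2.2 : ℂ) * q ^ (x.2.2 * y.2.1))
  else 0

/-- `τ`, extended bilinearly. -/
def tau (q : ℂ) (x y : L3) : ℂ × ℂ :=
  x.sum fun p α => y.sum fun r β => (α * β) • tauB q p r

section bil
variable {M : Type*} [AddCommGroup M] [Module ℂ M]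
  (g : (Fin 3 × Fin 3) × ℤ × ℤ → (Fin 3 × Fin 3) × ℤ × ℤ → M)

def bil (x y : L3) : M := x.sum fun p α => y.sum fun r β => (α * β) • g p r

lemma bil_zero_left (y : L3) : bil g 0 y = 0 := by simp [bil]

lemma bil_zero_right (x : L3) : bil g x 0 = 0 := by simp [bil]

lemma bil_add_left (x x' y : L3) : bil g (x + x') y = bil g x y + bil g x' y := by
  classical
  refine Finsupp.sum_add_index' (fun p => ?_) (fun p b1 b2 => ?_)
  · simp
  · rw [← Finsupp.sum_add]
    congr 1; ext r β
    rw [add_mul, add_smul]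

lemma bil_add_right (x y y' : L3) : bil g x (y + y') = bil g x y + bil g x y' := by
  classical
  unfold bil
  rw [← Finsupp.sum_add]
  congr 1; ext p α
  refine Finsupp.sum_add_index' (fun r => ?_) (fun r b1 b2 => ?_)
  · simp
  · rw [mul_add, add_smul]

lemma bil_single_single (p r : (Fin 3 × Fin 3) × ℤ × ℤ) (a b : ℂ) :
    bil g (Finsupp.single p a) (Finsupp.single r b) = (a * b) • g p r := by
  classical
  unfold bil
  rw [Finsupp.sum_single_index, Finsupp.sum_single_index]
  · simp
  · simp [Finsupp.sum_single_index]

lemma bil_smul_left (c : ℂ) (x y : L3) : bil g (c • x) y = c • bil g x y := by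
  classical
  unfold bil
  rw [Finsupp.sum_smul_index, Finsupp.smul_sum]
  · congr 1; ext p α
    rw [Finsupp.smul_sum]
    congr 1; ext r β
    rw [smul_smul, mul_assoc]
  · simp

lemma bil_smul_right (c : ℂ) (x y : L3) : bil g x (c • y) = c • bil g x y := by
  classical
  unfold bil
  rw [Finsupp.smul_sum]
  congr 1; ext p α
  rw [Finsupp.sum_smul_index, Finsupp.smul_sum]
  · congr 1; ext r β
    rw [smul_smul, mul_left_comm]
  · simp

lemma bil_neg_left (x y : L3) : bil g (-x) y = -bil g x y := by
  have h := bil_add_left g x (-x) y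
  simp only [add_neg_cancel, bil_zero_left] at h
  exact eq_neg_of_add_eq_zero_right h.symm

lemma bil_sub_left (x x' y : L3) : bil g (x - x') y = bil g x y - bil g x' y := by
  rw [sub_eq_add_neg, bil_add_left, bil_neg_left, sub_eq_add_neg]

end bil

lemma tau_eq (q : ℂ) (x y : L3) : tau q x y = bil (tauB q) x y := rfl
lemma brL_eq (q : ℂ) (x y : L3) : brL q x y = bil (bb0 q) x y := rfl

lemma tauB_skew (q : ℂ) (p r : (Fin 3 × Fin 3) × ℤ × ℤ) : tauB q p r = -tauB q r p := by
  obtain ⟨⟨i, j⟩, m1, n1⟩ := p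
  obtain ⟨⟨k, l⟩, m2, n2⟩ := r
  simp only [tauB]
  split_ifs with h1 h2 h2
  · obtain ⟨a, b, c, d⟩ := h1
    obtain rfl : m2 = -m1 := by omega
    obtain rfl : n2 = -n1 := by omega
    have e : -n1 * m1 = n1 * -m1 := by ring
    simp only [e, Prod.neg_mk, Prod.mk.injEq]
    push_cast
    constructor <;> ring
  · obtain ⟨a, b, c, d⟩ := h1
    exact absurd ⟨b.symm, a.symm, by omega, by omega⟩ h2
  · obtain ⟨a, b, c, d⟩ := h2
    exact absurd ⟨b.symm, a.symm, by omega, by omega⟩ h1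
  · simp

/-- `τ(bb0 p r, E_s)`. -/
def Tb (q : ℂ) (p r s : (Fin 3 × Fin 3) × ℤ × ℤ) : ℂ × ℂ :=
  tau q (bb0 q p r) (Finsupp.single s 1)

lemma Tb_eq (q : ℂ) (p r s : (Fin 3 × Fin 3) × ℤ × ℤ) : Tb q p r s =
    (if p.1.2 = r.1.1 then
        (q ^ (p.2.2 * r.2.1)) • tauB q ((p.1.1, r.1.2), (p.2.1 + r.2.1, p.2.2 + r.2.2)) s
      else 0)
    - (if p.1.1 = r.1.2 then
        (q ^ (r.2.2 * p.2.1)) • tauB q ((r.1.1, p.1.2), (p.2.1 + r.2.1, p.2.2 + r.2.2)) s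
      else 0) := by
  unfold Tb
  rw [tau_eq, bb0, bil_sub_left]
  congr 1 <;> split_ifs <;>
    simp [bil_single_single, bil_zero_left]

lemma tauB_mzero (q : ℂ) (x y : (Fin 3 × Fin 3) × ℤ × ℤ) (h : x.2.1 + y.2.1 ≠ 0) :
    tauB q x y = 0 := by
  rw [tauB, if_neg]; tauto

lemma Tb_mzero (q : ℂ) (p r s : (Fin 3 × Fin 3) × ℤ × ℤ) (h : p.2.1 + r.2.1 + s.2.1 ≠ 0) :
    Tb q p r s = 0 := by
  rw [Tb_eq, tauB_mzero q _ _ (by simpa using by omega), tauB_mzero q _ _ (by simpa using by omega)]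
  simp

lemma tauB_nzero (q : ℂ) (x y : (Fin 3 × Fin 3) × ℤ × ℤ) (h : x.2.2 + y.2.2 ≠ 0) :
    tauB q x y = 0 := by
  rw [tauB, if_neg]; tauto

lemma Tb_nzero (q : ℂ) (p r s : (Fin 3 × Fin 3) × ℤ × ℤ) (h : p.2.2 + r.2.2 + s.2.2 ≠ 0) :
    Tb q p r s = 0 := by
  rw [Tb_eq, tauB_nzero q _ _ (by simpa using by omega), tauB_nzero q _ _ (by simpa using by omega)]
  simp

lemma iiz {M : Type*} [AddCommGroup M] [Module ℂ M] (a b : Prop) [Decidable a] [Decidable b]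
    (c : ℂ) (x : M) (h : ¬(a ∧ b)) : (if a then c • (if b then x else 0) else 0) = 0 := by
  split_ifs with h1 h2
  · exact absurd ⟨h1, h2⟩ h
  · simp
  · rfl

lemma key (q : ℂ) (hq : q ≠ 0) (p r s : (Fin 3 × Fin 3) × ℤ × ℤ) :
    Tb q p r s + Tb q r s p + Tb q s p r = 0 := by
  obtain ⟨⟨i, j⟩, m1, n1⟩ := p
  obtain ⟨⟨k, l⟩, m2, n2⟩ := r
  obtain ⟨⟨u, v⟩, m3, n3⟩ := s
  by_cases hM : m1 + m2 + m3 = 0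
  · by_cases hN : n1 + n2 + n3 = 0
    · obtain rfl : m3 = -m1 - m2 := by omega
      obtain rfl : n3 = -n1 - n2 := by omega
      simp only [Tb_eq, tauB]
      simp only [show m1 + m2 + (-m1 - m2) = 0 from by ring,
        show m2 + (-m1 - m2) + m1 = 0 from by ring,
        show -m1 - m2 + m1 + m2 = 0 from by ring,
        show n1 + n2 + (-n1 - n2) = 0 from by ring,
        show n2 + (-n1 - n2) + n1 = 0 from by ring,
        show -n1 - n2 + n1 + n2 = 0 from by ring,
        eq_self_iff_true, and_true, true_and]
      have hmerge : ∀ (a b : ℤ) (c : ℂ), q ^ a * (c * q ^ b) = c * q ^ (a + b) := fun a b c => by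
        rw [zpow_add₀ hq]; ring
      by_cases hA : j = k ∧ l = u ∧ i = v
      · obtain ⟨rfl, rfl, rfl⟩ := hA
        simp only [eq_self_iff_true, and_self, if_true, true_and, and_true]
        by_cases hB : i = l ∧ j = i
        · obtain ⟨h1, h2⟩ := hB
          subst h1; subst h2
          simp only [eq_self_iff_true, and_self, if_true]
          refine Prod.ext_iff.mpr ⟨?_, ?_⟩ <;>
          · simp only [Prod.fst_add, Prod.fst_sub, Prod.snd_add, Prod.snd_sub, Prod.smul_fst,
              Prod.smul_snd, Prod.fst_zero, Prod.snd_zero, smul_eq_mul]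
            simp only [hmerge]
            push_cast
            ring_nf
        · rw [iiz _ _ _ _ (fun h => hB ⟨h.1, h.2.2⟩),
            iiz _ _ _ _ (fun h => hB ⟨h.2.1.symm, h.1⟩),
            iiz _ _ _ _ (fun h => hB ⟨h.2.2, h.2.1.symm⟩)]
          simp only [sub_zero]
          refine Prod.ext_iff.mpr ⟨?_, ?_⟩ <;>
          · simp only [Prod.fst_add, Prod.fst_sub, Prod.snd_add, Prod.snd_sub, Prod.smul_fst,
              Prod.smul_snd, Prod.fst_zero, Prod.snd_zero, smul_eq_mul]
            simp only [hmerge]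
            push_cast
            ring_nf
      · by_cases hB : i = l ∧ j = u ∧ k = v
        · obtain ⟨h1, h2, h3⟩ := hB
          subst h1; subst h2; subst h3
          simp only [eq_self_iff_true, and_self, if_true, true_and, and_true]
          rw [iiz _ _ _ _ (fun h => hA ⟨h.1, h.2.1, h.2.2⟩),
            iiz _ _ _ _ (fun h => hA ⟨h.2.2.symm, h.1, h.2.1.symm⟩),
            iiz _ _ _ _ (fun h => hA ⟨h.2.1, h.2.2.symm, h.1.symm⟩)]
          simp only [zero_sub]
          refine Prod.ext_iff.mpr ⟨?_, ?_⟩ <;>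
          · simp only [Prod.fst_add, Prod.fst_neg, Prod.snd_add, Prod.snd_neg, Prod.smul_fst,
              Prod.smul_snd, Prod.fst_zero, Prod.snd_zero, smul_eq_mul]
            simp only [hmerge]
            push_cast
            ring_nf
        · rw [iiz (j = k) (l = u ∧ i = v) _ _ (fun h => hA ⟨h.1, h.2.1, h.2.2⟩),
            iiz (i = l) (j = u ∧ k = v) _ _ (fun h => hB ⟨h.1, h.2.1, h.2.2⟩),
            iiz (l = u) (v = i ∧ k = j) _ _ (fun h => hA ⟨h.2.2.symm, h.1, h.2.1.symm⟩),
            iiz (k = v) (l = i ∧ u = j) _ _ (fun h => hB ⟨h.2.1.symm, h.2.2.symm, h.1⟩),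
            iiz (v = i) (j = k ∧ u = l) _ _ (fun h => hA ⟨h.2.1, h.2.2.symm, h.1.symm⟩),
            iiz (u = j) (v = k ∧ i = l) _ _ (fun h => hB ⟨h.2.2, h.1.symm, h.2.1.symm⟩)]
          simp
    · rw [Tb_nzero q _ _ _ (by simp; omega), Tb_nzero q _ _ _ (by simp; omega),
        Tb_nzero q _ _ _ (by simp; omega)]
      simp
  · rw [Tb_mzero q _ _ _ (by simp; omega), Tb_mzero q _ _ _ (by simp; omega),
      Tb_mzero q _ _ _ (by simp; omega)]
    simp

lemma tau_brL_single (q : ℂ) (p r s : (Fin 3 × Fin 3) × ℤ × ℤ) (a b c : ℂ) :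
    tau q (brL q (Finsupp.single p a) (Finsupp.single r b)) (Finsupp.single s c)
      = (a * b * c) • Tb q p r s := by
  rw [brL_eq, bil_single_single, tau_eq, bil_smul_left,
    show (Finsupp.single s c : L3) = c • Finsupp.single s 1 from by
      rw [Finsupp.smul_single', mul_one],
    bil_smul_right, smul_smul]
  rfl

/-- `τ` is a 2-cocycle: it is antisymmetric and satisfies
`τ([x,y],z) + τ([y,z],x) + τ([z,x],y) = 0`. -/
theorem tau_is_two_cocycle (q : ℂ) (hq : q ≠ 0) :
    (∀ x y : L3, tau q x y = -(tau q y x))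
    ∧ (∀ x y z : L3,
        tau q (brL q x y) z + tau q (brL q y z) x + tau q (brL q z x) y = 0) := by
  constructor
  · intro x y
    induction x using Finsupp.induction_linear with
    | zero => simp [tau_eq, bil_zero_left, bil_zero_right]
    | add f g hf hg =>
      simp only [tau_eq, bil_add_left, bil_add_right] at *
      rw [hf, hg]; abel
    | single p a =>
      induction y using Finsupp.induction_linear with
      | zero => simp [tau_eq, bil_zero_left, bil_zero_right]
      | add f g hf hg =>
        simp only [tau_eq, bil_add_left, bil_add_right] at *
        rw [hf, hg]; abel
      | single r b =>
        rw [tau_eq, tau_eq, bil_single_single, bil_single_single, tauB_skew q p r,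
          mul_comm a b, smul_neg]
  · intro x y z
    induction x using Finsupp.induction_linear with
    | zero => simp [tau_eq, brL_eq, bil_zero_left, bil_zero_right]
    | add f g hf hg =>
      simp only [tau_eq, brL_eq, bil_add_left, bil_add_right] at *
      linear_combination hf + hg
    | single p a =>
      induction y using Finsupp.induction_linear with
      | zero => simp [tau_eq, brL_eq, bil_zero_left, bil_zero_right]
      | add f g hf hg =>
        simp only [tau_eq, brL_eq, bil_add_left, bil_add_right] at *
        linear_combination hf + hg
      | single r b =>
        induction z using Finsupp.induction_linear with
        | zero => simp [tau_eq, brL_eq, bil_zero_left, bil_zero_right]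
        | add f g hf hg =>
          simp only [tau_eq, brL_eq, bil_add_left, bil_add_right] at *
          linear_combination hf + hg
        | single s c =>
          rw [tau_brL_single, tau_brL_single, tau_brL_single,
            show b * c * a = a * b * c from by ring,
            show c * a * b = a * b * c from by ring,
            ← smul_add, ← smul_add, key q hq, smul_zero]
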